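/- arXiv:1609.01249 — 10 statements merged into one kernel-verified Lean document; each statement's English description precedes it below -/
import Mathlib

section
/- For every natural number m ≥ 1, every n ≥ 1, and all real numbers x_1, ..., x_n, the quantity G_{2m}(x) = Σ_{r=0}^{2m} (-1)^r (Σ_{k=1}^n x_k^r)(Σ_{k=1}^n x_k^{2m-r}) is nonnegative. -/
lemma gasparyan_key (m : ℕ) (a b : ℝ) :
    0 ≤ ∑ r ∈ Finset.range (2 * m + 1), (-1 : ℝ) ^ r * a ^ r * b ^ (2 * m - r) := by
  have hodd : Odd (2 * m + 1) := ⟨m, by ring⟩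
  have h1 : ∀ r ∈ Finset.range (2 * m + 1),
      (-1 : ℝ) ^ r * a ^ r * b ^ (2 * m - r) = a ^ r * (-b) ^ (2 * m + 1 - 1 - r) := by
    intro r hr
    have hr' : r ≤ 2 * m := Nat.lt_succ_iff.mp (Finset.mem_range.mp hr)
    have he : (2 * m + 1 - 1 - r) = 2 * m - r := by omega
    have hsign : (-1 : ℝ) ^ (2 * m - r) = (-1 : ℝ) ^ r := by
      rcases Nat.even_or_odd r with h | h
      · have h2 : Even (2 * m - r) := by rw [Nat.even_iff] at h ⊢; omega
        rw [h.neg_one_pow, h2.neg_one_pow]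
      · have h2 : Odd (2 * m - r) := by rw [Nat.odd_iff] at h ⊢; omega
        rw [h.neg_one_pow, h2.neg_one_pow]
    have hnb : (-b) ^ (2 * m + 1 - 1 - r) = (-1 : ℝ) ^ r * b ^ (2 * m - r) := by
      rw [he, neg_pow, hsign]
    rw [hnb]; ring
  rw [Finset.sum_congr rfl h1]
  set S := ∑ r ∈ Finset.range (2 * m + 1), a ^ r * (-b) ^ (2 * m + 1 - 1 - r) with hS
  have hmul : S * (a + b) = a ^ (2 * m + 1) + b ^ (2 * m + 1) := by
    have := geom_sum₂_mul a (-b) (2 * m + 1)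
    rw [sub_neg_eq_add, hodd.neg_pow, sub_neg_eq_add] at this
    exact this
  rcases lt_trichotomy (a + b) 0 with h | h | h
  · have hab : a < -b := by linarith
    have h2 := (Odd.strictMono_pow (R := ℝ) hodd) hab
    simp only [hodd.neg_pow] at h2
    nlinarith
  · have hb : b = -a := by linarith
    subst hb
    have he : ∀ r ∈ Finset.range (2 * m + 1),
        a ^ r * (- -a) ^ (2 * m + 1 - 1 - r) = a ^ (2 * m) := by
      intro r hr
      have hr' : r ≤ 2 * m := Nat.lt_succ_iff.mp (Finset.mem_range.mp hr)
      rw [neg_neg, ← pow_add]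
      congr 1; omega
    rw [hS, Finset.sum_congr rfl he, Finset.sum_const, Finset.card_range, nsmul_eq_mul]
    have ha : (0 : ℝ) ≤ a ^ (2 * m) := by rw [pow_mul]; positivity
    positivity
  · have hab : -b < a := by linarith
    have h2 := (Odd.strictMono_pow (R := ℝ) hodd) hab
    simp only [hodd.neg_pow] at h2
    nlinarith

theorem gasparyan_nonneg (m n : ℕ) (hm : 1 ≤ m) (hn : 1 ≤ n) (x : Fin n → ℝ) :
    0 ≤ ∑ r ∈ Finset.range (2 * m + 1),
      (-1 : ℝ) ^ r * (∑ k, x k ^ r) * (∑ k, x k ^ (2 * m - r)) := by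
  have hrw : ∀ r ∈ Finset.range (2 * m + 1),
      (-1 : ℝ) ^ r * (∑ k, x k ^ r) * (∑ k, x k ^ (2 * m - r))
        = ∑ j, ∑ k, (-1 : ℝ) ^ r * x j ^ r * x k ^ (2 * m - r) := by
    intro r _
    rw [mul_assoc, Finset.sum_mul_sum, Finset.mul_sum]
    refine Finset.sum_congr rfl fun j _ => ?_
    rw [Finset.mul_sum]
    exact Finset.sum_congr rfl fun k _ => by ring
  rw [Finset.sum_congr rfl hrw, Finset.sum_comm]
  refine Finset.sum_nonneg fun j _ => ?_
  rw [Finset.sum_comm]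
  exact Finset.sum_nonneg fun k _ => gasparyan_key m (x j) (x k)
end

section
/- If m is an even positive integer, then for all real x_1,...,x_n, G_{2m}(x) ≥ (Σ_{i=1}^n x_i^m)^2. -/
open Finset in
lemma gasparyan_neg_one_parity (m r : ℕ) (hr : r ≤ 2 * m) :
    (-1 : ℝ) ^ (2 * m - r) = (-1 : ℝ) ^ r := by
  have h2 : (-1 : ℝ) ^ (2 * m - r) * (-1) ^ r = 1 := by
    rw [← pow_add]
    have h : 2 * m - r + r = 2 * m := by omega
    rw [h]
    exact Even.neg_one_pow ⟨m, by ring⟩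
  have h3 : (-1 : ℝ) ^ r * (-1) ^ r = 1 := by
    rw [← pow_add]
    exact Even.neg_one_pow ⟨r, rfl⟩
  calc (-1 : ℝ) ^ (2 * m - r) = (-1) ^ (2 * m - r) * ((-1) ^ r * (-1) ^ r) := by
        rw [h3, mul_one]
    _ = ((-1) ^ (2 * m - r) * (-1) ^ r) * (-1) ^ r := by ring
    _ = (-1) ^ r := by rw [h2, one_mul]

open Finset in
lemma gasparyan_pointwise (m : ℕ) (hm : 1 ≤ m) (hme : Even m) (a b : ℝ) :
    a ^ m * b ^ m ≤
      ∑ r ∈ Finset.range (2 * m + 1), (-1 : ℝ) ^ r * a ^ r * b ^ (2 * m - r) := by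
  obtain ⟨t, ht⟩ := hme
  set f : ℝ := ∑ r ∈ Finset.range (2 * m + 1), (-1 : ℝ) ^ r * a ^ r * b ^ (2 * m - r) with hf
  -- rewrite f as geom_sum₂ with (a, -b)
  have hfeq : f = ∑ r ∈ Finset.range (2 * m + 1), a ^ r * (-b) ^ (2 * m + 1 - 1 - r) := by
    refine Finset.sum_congr rfl fun r hr => ?_
    simp only [Finset.mem_range] at hr
    have hr' : r ≤ 2 * m := by omega
    have h1 : 2 * m + 1 - 1 - r = 2 * m - r := by omega
    have hnb : (-b) ^ (2 * m - r) = (-1 : ℝ) ^ (2 * m - r) * b ^ (2 * m - r) :=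
      neg_pow b (2 * m - r)
    rw [h1, hnb, gasparyan_neg_one_parity m r hr']
    ring
  have key : (a + b) * f = a ^ (2 * m + 1) + b ^ (2 * m + 1) := by
    have hgs := geom_sum₂_mul a (-b) (2 * m + 1)
    rw [← hfeq] at hgs
    have hodd : Odd (2 * m + 1) := ⟨m, by ring⟩
    rw [hodd.neg_pow] at hgs
    calc (a + b) * f = f * (a - -b) := by ring
    _ = a ^ (2 * m + 1) - -b ^ (2 * m + 1) := hgs
    _ = a ^ (2 * m + 1) + b ^ (2 * m + 1) := by ring
  -- Q : the nonnegative cofactor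
  set Q : ℝ := ∑ i ∈ Finset.range t, (a ^ 2) ^ i * (b ^ 2) ^ (t - 1 - i) with hQ
  have hQ0 : 0 ≤ Q := Finset.sum_nonneg fun i _ =>
    mul_nonneg (pow_nonneg (sq_nonneg a) _) (pow_nonneg (sq_nonneg b) _)
  have hfac : a ^ m - b ^ m = (a + b) * ((a - b) * Q) := by
    have hgs := geom_sum₂_mul (a ^ 2) (b ^ 2) t
    rw [← hQ] at hgs
    have ha : a ^ m = (a ^ 2) ^ t := by rw [← pow_mul]; congr 1; omega
    have hb : b ^ m = (b ^ 2) ^ t := by rw [← pow_mul]; congr 1; omega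
    rw [ha, hb, ← hgs]; ring
  -- (a-b)*(a^(m+1) - b^(m+1)) ≥ 0
  have hodd1 : Odd (m + 1) := ⟨t, by omega⟩
  have hD : 0 ≤ (a - b) * (a ^ (m + 1) - b ^ (m + 1)) := by
    rcases le_total a b with h | h
    · have hmono := (hodd1.strictMono_pow (R := ℝ)).monotone h
      nlinarith
    · have hmono := (hodd1.strictMono_pow (R := ℝ)).monotone h
      nlinarith
  by_cases hab : a + b = 0
  · -- b = -a
    have hb : b = -a := by linarith
    subst hb
    have hterm : ∀ r ∈ Finset.range (2 * m + 1),
        (-1 : ℝ) ^ r * a ^ r * (-a) ^ (2 * m - r) = a ^ (2 * m) := by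
      intro r hr
      simp only [Finset.mem_range] at hr
      have hr' : r ≤ 2 * m := by omega
      have hnb : (-a) ^ (2 * m - r) = (-1 : ℝ) ^ (2 * m - r) * a ^ (2 * m - r) :=
        neg_pow a (2 * m - r)
      rw [hnb, gasparyan_neg_one_parity m r hr']
      have h3 : (-1 : ℝ) ^ r * (-1) ^ r = 1 := by
        rw [← pow_add]; exact Even.neg_one_pow ⟨r, rfl⟩
      have h4 : a ^ r * a ^ (2 * m - r) = a ^ (2 * m) := by
        rw [← pow_add]; congr 1; omega
      calc (-1 : ℝ) ^ r * a ^ r * ((-1) ^ r * a ^ (2 * m - r))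
          = ((-1 : ℝ) ^ r * (-1) ^ r) * (a ^ r * a ^ (2 * m - r)) := by ring
        _ = a ^ (2 * m) := by rw [h3, h4, one_mul]
    have hfval : f = (2 * m + 1 : ℕ) * a ^ (2 * m) := by
      rw [hf, Finset.sum_congr rfl hterm, Finset.sum_const, Finset.card_range,
        nsmul_eq_mul]
    have hlhs : a ^ m * (-a) ^ m = a ^ (2 * m) := by
      rw [Even.neg_pow ⟨t, ht⟩, ← pow_add]; congr 1; omega
    rw [hfval, hlhs]
    have h0 : (0 : ℝ) ≤ a ^ (2 * m) := by
      have hsq : a ^ (2 * m) = (a ^ m) ^ 2 := by rw [← pow_mul, mul_comm]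
      rw [hsq]; positivity
    have h5 : (1 : ℝ) ≤ (2 * m + 1 : ℕ) := by exact_mod_cast Nat.one_le_iff_ne_zero.mpr (by omega)
    nlinarith
  · -- a + b ≠ 0 : cancel
    have hid : (a + b) * (f - a ^ m * b ^ m) =
        (a + b) * ((a - b) * Q * (a ^ (m + 1) - b ^ (m + 1))) := by
      have expand : (a + b) * (f - a ^ m * b ^ m)
          = (a ^ m - b ^ m) * (a ^ (m + 1) - b ^ (m + 1)) := by
        rw [mul_sub, key]; ring
      rw [expand, hfac]; ring
    have hcan := mul_left_cancel₀ hab hid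
    nlinarith [mul_nonneg hD hQ0]

theorem gasparyan_even (m n : ℕ) (hm : 1 ≤ m) (hme : Even m) (x : Fin n → ℝ) :
    (∑ i, x i ^ m) ^ 2 ≤
      ∑ r ∈ Finset.range (2 * m + 1),
        (-1 : ℝ) ^ r * (∑ k, x k ^ r) * (∑ k, x k ^ (2 * m - r)) := by
  have hrhs : ∑ r ∈ Finset.range (2 * m + 1),
        (-1 : ℝ) ^ r * (∑ k, x k ^ r) * (∑ k, x k ^ (2 * m - r))
      = ∑ i, ∑ j, ∑ r ∈ Finset.range (2 * m + 1),
          (-1 : ℝ) ^ r * x i ^ r * x j ^ (2 * m - r) := by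
    have step : ∀ r ∈ Finset.range (2 * m + 1),
        (-1 : ℝ) ^ r * (∑ k, x k ^ r) * (∑ k, x k ^ (2 * m - r))
        = ∑ i, ∑ j, (-1 : ℝ) ^ r * x i ^ r * x j ^ (2 * m - r) := by
      intro r _
      rw [mul_assoc, Finset.sum_mul_sum, Finset.mul_sum]
      refine Finset.sum_congr rfl fun i _ => ?_
      rw [Finset.mul_sum]
      refine Finset.sum_congr rfl fun j _ => ?_
      ring
    rw [Finset.sum_congr rfl step, Finset.sum_comm]
    refine Finset.sum_congr rfl fun i _ => Finset.sum_comm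
  rw [hrhs, sq, Finset.sum_mul_sum]
  refine Finset.sum_le_sum fun i _ => Finset.sum_le_sum fun j _ => ?_
  exact gasparyan_pointwise m hm hme (x i) (x j)
end

section
/- If m is an odd positive integer, then for all real x_1,...,x_n, G_{2m}(x) ≥ (Σ_{i=1}^n x_i^{m-1})(Σ_{i=1}^n x_i^{m+1}). -/
open Finset

noncomputable def G (m : ℕ) (a b : ℝ) : ℝ :=
  ∑ r ∈ Finset.range (2 * m + 1), (-1 : ℝ) ^ r * a ^ r * b ^ (2 * m - r)

lemma mul_nonneg_np {x y : ℝ} (h1 : x ≤ 0) (h2 : y ≤ 0) : 0 ≤ x * y := by nlinarith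

lemma odd_pow_mono {n : ℕ} (hn : Odd n) {a b : ℝ} (h : a ≤ b) : a ^ n ≤ b ^ n :=
  hn.strictMono_pow.monotone h

lemma G_rec1 (m : ℕ) (a b : ℝ) :
    G (m + 1) a b = b ^ 2 * G m a b + a ^ (2 * m + 1) * (a - b) := by
  unfold G
  have h : 2 * (m + 1) + 1 = (2 * m + 1) + 1 + 1 := by ring
  rw [h, Finset.sum_range_succ, Finset.sum_range_succ, Finset.mul_sum]
  have h1 : ∑ r ∈ range (2 * m + 1), (-1 : ℝ) ^ r * a ^ r * b ^ (2 * (m + 1) - r)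
      = ∑ r ∈ range (2 * m + 1), b ^ 2 * ((-1 : ℝ) ^ r * a ^ r * b ^ (2 * m - r)) := by
    refine Finset.sum_congr rfl fun r hr => ?_
    have hr' : r ≤ 2 * m := by
      have := Finset.mem_range.mp hr; omega
    have he : 2 * (m + 1) - r = (2 * m - r) + 2 := by omega
    rw [he, pow_add]; ring
  rw [h1]
  have e1 : 2 * (m + 1) - (2 * m + 1) = 1 := by omega
  have e2 : 2 * (m + 1) - (2 * m + 1 + 1) = 0 := by omega
  rw [e1, e2]
  have o1 : ((-1 : ℝ)) ^ (2 * m + 1) = -1 := Odd.neg_one_pow ⟨m, by ring⟩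
  have o2 : ((-1 : ℝ)) ^ (2 * m + 1 + 1) = 1 := Even.neg_one_pow ⟨m + 1, by ring⟩
  rw [o1, o2]
  ring

lemma G_rec2 (m : ℕ) (a b : ℝ) :
    G (m + 1) a b = a ^ 2 * G m a b + b ^ (2 * m + 1) * (b - a) := by
  unfold G
  have h : 2 * (m + 1) + 1 = (2 * m + 1) + 1 + 1 := by ring
  rw [h, Finset.sum_range_succ', Finset.sum_range_succ', Finset.mul_sum]
  have h1 : ∑ r ∈ range (2 * m + 1), (-1 : ℝ) ^ (r + 1 + 1) * a ^ (r + 1 + 1) * b ^ (2 * (m + 1) - (r + 1 + 1))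
      = ∑ r ∈ range (2 * m + 1), a ^ 2 * ((-1 : ℝ) ^ r * a ^ r * b ^ (2 * m - r)) := by
    refine Finset.sum_congr rfl fun r hr => ?_
    have he : 2 * (m + 1) - (r + 1 + 1) = 2 * m - r := by omega
    rw [he, pow_add, pow_add]; ring
  rw [h1]
  have e1 : 2 * (m + 1) - (0 + 1) = 2 * m + 1 := by omega
  have e2 : 2 * (m + 1) - 0 = (2 * m + 1) + 1 := by omega
  rw [e1, e2]
  ring

lemma G_nonneg (m : ℕ) (a b : ℝ) : 0 ≤ G m a b := by
  induction m with
  | zero => simp [G]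
  | succ m ih =>
    have h1 := G_rec1 m a b
    have h2 := G_rec2 m a b
    have hsum : 2 * G (m + 1) a b
        = (a ^ 2 + b ^ 2) * G m a b + (a - b) * (a ^ (2 * m + 1) - b ^ (2 * m + 1)) := by
      linear_combination h1 + h2
    have hkey : 0 ≤ (a - b) * (a ^ (2 * m + 1) - b ^ (2 * m + 1)) := by
      rcases le_total a b with h | h
      · have := odd_pow_mono (n := 2 * m + 1) ⟨m, by ring⟩ h
        exact mul_nonneg_np (by linarith) (by linarith)
      · have := odd_pow_mono (n := 2 * m + 1) ⟨m, by ring⟩ h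
        exact mul_nonneg (by linarith) (by linarith)
    have hpos : 0 ≤ (a ^ 2 + b ^ 2) * G m a b := mul_nonneg (by positivity) ih
    linarith

lemma key_ineq (k : ℕ) (a b : ℝ) :
    a ^ (2 * k) * b ^ (2 * k + 2) + a ^ (2 * k + 2) * b ^ (2 * k) ≤ 2 * G (2 * k + 1) a b := by
  induction k generalizing a b with
  | zero =>
    have : G 1 a b = b ^ 2 - a * b + a ^ 2 := by
      simp [G, Finset.sum_range_succ]
      ring
    rw [this]
    norm_num
    nlinarith [sq_nonneg (a - b)]
  | succ k ih =>
    have e1 := G_rec1 (2 * k + 2) a b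
    have e2 := G_rec1 (2 * k + 1) a b
    have e3 := G_rec2 (2 * k + 2) a b
    have e4 := G_rec2 (2 * k + 1) a b
    have hGG : G (2 * (k + 1) + 1) a b = G (2 * k + 2 + 1) a b := by
      rw [show 2 * (k + 1) + 1 = 2 * k + 2 + 1 from by ring]
    have hrec : 2 * G (2 * (k + 1) + 1) a b
        = (a ^ 4 + b ^ 4) * G (2 * k + 1) a b
          + (a - b) * (a ^ 2 * b ^ 2 * (a ^ (4 * k + 1) - b ^ (4 * k + 1))
            + (a ^ (4 * k + 5) - b ^ (4 * k + 5))) := by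
      rw [hGG]
      linear_combination e1 + e3 + b ^ 2 * e2 + a ^ 2 * e4
    have hD : 0 ≤ (a - b) * (a ^ 2 * b ^ 2 * (a ^ (4 * k + 1) - b ^ (4 * k + 1))
        + (a ^ (4 * k + 5) - b ^ (4 * k + 5))) := by
      rcases le_total a b with h | h
      · have p1 := odd_pow_mono (n := 4 * k + 1) ⟨2 * k, by ring⟩ h
        have p2 := odd_pow_mono (n := 4 * k + 5) ⟨2 * k + 2, by ring⟩ h
        have hab : (0:ℝ) ≤ a ^ 2 * b ^ 2 := by positivity
        refine mul_nonneg_np (by linarith) ?_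
        nlinarith
      · have p1 := odd_pow_mono (n := 4 * k + 1) ⟨2 * k, by ring⟩ h
        have p2 := odd_pow_mono (n := 4 * k + 5) ⟨2 * k + 2, by ring⟩ h
        have hab : (0:ℝ) ≤ a ^ 2 * b ^ 2 := by positivity
        refine mul_nonneg (by linarith) ?_
        nlinarith
    have ihk := ih a b
    have hmul : (a ^ 4 + b ^ 4) * (a ^ (2 * k) * b ^ (2 * k + 2) + a ^ (2 * k + 2) * b ^ (2 * k))
        ≤ (a ^ 4 + b ^ 4) * (2 * G (2 * k + 1) a b) :=
      mul_le_mul_of_nonneg_left ihk (by positivity)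
    have hsq : 0 ≤ ((a * b) ^ k * (a ^ 2 - b ^ 2)) ^ 2 * (a ^ 2 + b ^ 2) :=
      mul_nonneg (sq_nonneg _) (by positivity)
    have hdiff : (a ^ 4 + b ^ 4) * (a ^ (2 * k) * b ^ (2 * k + 2) + a ^ (2 * k + 2) * b ^ (2 * k))
        - 2 * (a ^ (2 * (k + 1)) * b ^ (2 * (k + 1) + 2) + a ^ (2 * (k + 1) + 2) * b ^ (2 * (k + 1)))
        = ((a * b) ^ k * (a ^ 2 - b ^ 2)) ^ 2 * (a ^ 2 + b ^ 2) := by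
      ring
    nlinarith [hrec, hD, hmul, hsq, hdiff]

theorem gasparyan_odd (m n : ℕ) (hm : 1 ≤ m) (hmo : Odd m) (x : Fin n → ℝ) :
    (∑ i, x i ^ (m - 1)) * (∑ i, x i ^ (m + 1)) ≤
      ∑ r ∈ Finset.range (2 * m + 1),
        (-1 : ℝ) ^ r * (∑ k, x k ^ r) * (∑ k, x k ^ (2 * m - r)) := by
  obtain ⟨t, ht⟩ := hmo
  subst ht
  have hm1 : 2 * t + 1 - 1 = 2 * t := by omega
  rw [hm1]
  set N := 2 * (2 * t + 1) with hN
  have hR : ∑ r ∈ Finset.range (N + 1),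
      (-1 : ℝ) ^ r * (∑ k, x k ^ r) * (∑ k, x k ^ (N - r))
      = ∑ i, ∑ j, G (2 * t + 1) (x i) (x j) := by
    have step : ∀ r, (-1 : ℝ) ^ r * (∑ k, x k ^ r) * (∑ k, x k ^ (N - r))
        = ∑ i, ∑ j, (-1 : ℝ) ^ r * x i ^ r * x j ^ (N - r) := by
      intro r
      rw [mul_assoc, Finset.sum_mul_sum, Finset.mul_sum]
      refine Finset.sum_congr rfl fun i _ => ?_
      rw [Finset.mul_sum]
      refine Finset.sum_congr rfl fun j _ => ?_
      ring
    calc ∑ r ∈ Finset.range (N + 1), (-1 : ℝ) ^ r * (∑ k, x k ^ r) * (∑ k, x k ^ (N - r))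
        = ∑ r ∈ Finset.range (N + 1), ∑ i, ∑ j, (-1 : ℝ) ^ r * x i ^ r * x j ^ (N - r) := by
          exact Finset.sum_congr rfl fun r _ => step r
      _ = ∑ i, ∑ j, ∑ r ∈ Finset.range (N + 1), (-1 : ℝ) ^ r * x i ^ r * x j ^ (N - r) := by
          rw [Finset.sum_comm]
          exact Finset.sum_congr rfl fun i _ => Finset.sum_comm
      _ = ∑ i, ∑ j, G (2 * t + 1) (x i) (x j) := rfl
  have hL : 2 * ((∑ i, x i ^ (2 * t)) * (∑ i, x i ^ (2 * t + 1 + 1)))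
      = ∑ i, ∑ j, (x i ^ (2 * t) * x j ^ (2 * t + 2) + x i ^ (2 * t + 2) * x j ^ (2 * t)) := by
    have e1 : (∑ i, x i ^ (2 * t)) * (∑ j, x j ^ (2 * t + 2))
        = ∑ i, ∑ j, x i ^ (2 * t) * x j ^ (2 * t + 2) := Finset.sum_mul_sum _ _ _ _
    have e2 : (∑ i, x i ^ (2 * t + 2)) * (∑ j, x j ^ (2 * t))
        = ∑ i, ∑ j, x i ^ (2 * t + 2) * x j ^ (2 * t) := Finset.sum_mul_sum _ _ _ _
    have e3 : (2 * t + 1 + 1) = 2 * t + 2 := by omega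
    rw [e3]
    rw [show 2 * ((∑ i, x i ^ (2 * t)) * ∑ i, x i ^ (2 * t + 2))
        = (∑ i, x i ^ (2 * t)) * (∑ j, x j ^ (2 * t + 2))
          + (∑ i, x i ^ (2 * t + 2)) * (∑ j, x j ^ (2 * t)) from by ring]
    rw [e1, e2, ← Finset.sum_add_distrib]
    exact Finset.sum_congr rfl fun i _ => (Finset.sum_add_distrib).symm
  have hstep : ∑ i, ∑ j, (x i ^ (2 * t) * x j ^ (2 * t + 2) + x i ^ (2 * t + 2) * x j ^ (2 * t))
      ≤ ∑ i, ∑ j, 2 * G (2 * t + 1) (x i) (x j) :=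
    Finset.sum_le_sum fun i _ => Finset.sum_le_sum fun j _ => key_ineq t (x i) (x j)
  have h2 : ∑ i, ∑ j, 2 * G (2 * t + 1) (x i) (x j)
      = 2 * ∑ i, ∑ j, G (2 * t + 1) (x i) (x j) := by
    simp [Finset.mul_sum]
  rw [hR]
  linarith [hL, hstep, h2]
end

section
/- If m is even, x_1,...,x_n are all positive, and G_{2m}(x) = (Σ_{i=1}^n x_i^m)^2, then x_1 = x_2 = ... = x_n. -/
private lemma gasp_key (m : ℕ) (a b : ℝ) (ha : 0 < a) (hb : 0 < b) :
    ∑ r ∈ Finset.range (2*m+1), (-1:ℝ)^r * a^r * b^(2*m - r)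
    = ((a^m - b^m)*(a^(m+1) - b^(m+1)))/(a+b) + a^m * b^m := by
  have hab : 0 < a + b := by positivity
  have h := geom_sum₂_mul (-a) b (2*m+1)
  simp only [Nat.add_sub_cancel] at h
  have h2 : ∑ r ∈ Finset.range (2*m+1), (-1:ℝ)^r * a^r * b^(2*m - r)
      = ∑ i ∈ Finset.range (2*m+1), (-a)^i * b^(2*m-i) := by
    apply Finset.sum_congr rfl
    intro i hi
    rw [neg_pow]; ring
  rw [h2]
  have hodd : ((-a):ℝ)^(2*m+1) = -(a^(2*m+1)) := by
    rw [Odd.neg_pow ⟨m, by ring⟩]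
  rw [hodd] at h
  have hmul : (∑ i ∈ Finset.range (2*m+1), (-a)^i * b^(2*m-i)) * (a+b)
      = a^(2*m+1) + b^(2*m+1) := by linarith [h]
  field_simp
  rw [hmul]
  ring_nf

private lemma gasp_nonneg (m : ℕ) (a b : ℝ) (ha : 0 < a) (hb : 0 < b) :
    0 ≤ ((a^m - b^m)*(a^(m+1) - b^(m+1)))/(a+b) := by
  apply div_nonneg _ (by positivity)
  rcases le_total a b with hle | hle
  · have h1 := pow_le_pow_left₀ ha.le hle m
    have h2 := pow_le_pow_left₀ ha.le hle (m+1)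
    nlinarith
  · have h1 := pow_le_pow_left₀ hb.le hle m
    have h2 := pow_le_pow_left₀ hb.le hle (m+1)
    nlinarith

theorem gasparyan_even_eq_iff (m n : ℕ) (hm : 1 ≤ m) (hme : Even m) (hn : 2 ≤ n)
    (x : Fin n → ℝ) (hx : ∀ i, 0 < x i)
    (heq : ∑ r ∈ Finset.range (2 * m + 1),
        (-1 : ℝ) ^ r * (∑ k, x k ^ r) * (∑ k, x k ^ (2 * m - r))
      = (∑ i, x i ^ m) ^ 2) :
    ∀ i j, x i = x j := by
  set T : Fin n → Fin n → ℝ :=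
    fun k l => ((x k^m - x l^m)*(x k^(m+1) - x l^(m+1)))/(x k + x l) with hT
  have hLHS : ∑ r ∈ Finset.range (2 * m + 1),
      (-1 : ℝ) ^ r * (∑ k, x k ^ r) * (∑ k, x k ^ (2 * m - r))
      = ∑ k, ∑ l, (T k l + x k ^ m * x l ^ m) := by
    have step : ∑ r ∈ Finset.range (2 * m + 1),
        (-1 : ℝ) ^ r * (∑ k, x k ^ r) * (∑ k, x k ^ (2 * m - r))
        = ∑ k, ∑ l, ∑ r ∈ Finset.range (2*m+1), (-1:ℝ)^r * x k ^ r * x l ^ (2*m - r) := by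
      simp only [Finset.mul_sum, Finset.sum_mul]
      rw [Finset.sum_comm]
      have : ∀ l : Fin n, ∑ r ∈ Finset.range (2*m+1), ∑ i : Fin n, (-1:ℝ)^r * x i ^ r * x l ^ (2*m-r)
          = ∑ i : Fin n, ∑ r ∈ Finset.range (2*m+1), (-1:ℝ)^r * x i ^ r * x l ^ (2*m-r) :=
        fun l => Finset.sum_comm
      simp_rw [this]
      rw [Finset.sum_comm]
    rw [step]
    exact Finset.sum_congr rfl fun k _ => Finset.sum_congr rfl fun l _ =>
      gasp_key m (x k) (x l) (hx k) (hx l)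
  have hRHS : (∑ i, x i ^ m) ^ 2 = ∑ k, ∑ l, x k ^ m * x l ^ m := by
    rw [sq, Finset.sum_mul_sum]
  rw [hLHS, hRHS] at heq
  simp only [Finset.sum_add_distrib] at heq
  have hzero : ∑ k, ∑ l, T k l = 0 := by linarith
  have hnn : ∀ k l, 0 ≤ T k l := fun k l => gasp_nonneg m (x k) (x l) (hx k) (hx l)
  have hall : ∀ k l, T k l = 0 := by
    intro k l
    have h1 : ∀ k ∈ Finset.univ, (0:ℝ) ≤ ∑ l, T k l :=
      fun k _ => Finset.sum_nonneg fun l _ => hnn k l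
    have h2 := (Finset.sum_eq_zero_iff_of_nonneg h1).mp hzero k (Finset.mem_univ k)
    have h3 := (Finset.sum_eq_zero_iff_of_nonneg fun l _ => hnn k l).mp h2 l (Finset.mem_univ l)
    exact h3
  intro i j
  have hij := hall i j
  have hpos : 0 < x i + x j := by have := hx i; have := hx j; linarith
  rw [hT] at hij
  simp only [div_eq_zero_iff] at hij
  rcases hij with hij | hij
  · by_contra hne
    rcases lt_or_gt_of_ne hne with hlt | hlt
    · have h1 := pow_lt_pow_left₀ hlt (hx i).le (by omega : m ≠ 0)
      have h2 := pow_lt_pow_left₀ hlt (hx i).le (by omega : m + 1 ≠ 0)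
      nlinarith
    · have h1 := pow_lt_pow_left₀ hlt (hx j).le (by omega : m ≠ 0)
      have h2 := pow_lt_pow_left₀ hlt (hx j).le (by omega : m + 1 ≠ 0)
      nlinarith
  · linarith
end

section
/- If m is odd, x_1,...,x_n are all positive, and G_{2m}(x) = (Σ_{i=1}^n x_i^{m-1})(Σ_{i=1}^n x_i^{m+1}), then x_1 = x_2 = ... = x_n. -/
open Finset

theorem alt_sum_mul' (a b : ℝ) (m : ℕ) :
    (∑ r ∈ Finset.range (2*m+1), (-1:ℝ)^r * a^r * b^(2*m-r)) * (a + b)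
      = a^(2*m+1) + b^(2*m+1) := by
  have h := geom_sum₂_mul a (-b) (2*m+1)
  have hs : ∑ i ∈ Finset.range (2*m+1), a ^ i * (-b) ^ (2*m+1 - 1 - i)
      = ∑ r ∈ Finset.range (2*m+1), (-1:ℝ)^r * a^r * b^(2*m-r) := by
    refine Finset.sum_congr rfl fun i hi => ?_
    have hi' : i ≤ 2*m := Nat.lt_succ_iff.mp (Finset.mem_range.mp hi)
    have e1 : 2*m+1-1-i = 2*m - i := by omega
    rw [e1, neg_pow]
    have h1 : ((-1:ℝ))^(2*m - i) = (-1)^i := by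
      rcases Nat.even_or_odd i with h2 | h2
      · rw [Even.neg_one_pow h2, Even.neg_one_pow (by rw [Nat.even_iff] at *; omega)]
      · rw [Odd.neg_one_pow h2, Odd.neg_one_pow (by rw [Nat.odd_iff] at *; omega)]
    rw [h1]; ring
  rw [hs, sub_neg_eq_add] at h
  rw [h, Odd.neg_pow ⟨m, by ring⟩ b]
  ring

theorem key_identity' (k : ℕ) (a b : ℝ) :
    ((∑ r ∈ Finset.range (2*(k+1)+1), (-1:ℝ)^r * a^r * b^(2*(k+1)-r))
      + (∑ r ∈ Finset.range (2*(k+1)+1), (-1:ℝ)^r * b^r * a^(2*(k+1)-r))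
      - a^k * b^(k+2) - a^(k+2) * b^k) * (a + b)
    = (a^(k+1)-b^(k+1))*(a^(k+2)-b^(k+2)) + (a^k-b^k)*(a^(k+3)-b^(k+3)) := by
  have h1 := alt_sum_mul' a b (k+1)
  have h2 := alt_sum_mul' b a (k+1)
  have e : 2*(k+1)+1 = 2*k+3 := by ring
  rw [e] at h1 h2 ⊢
  linear_combination h1 + h2

theorem pair_rhs_nonneg' (k : ℕ) (a b : ℝ) (ha : 0 < a) (hb : 0 < b) :
    0 ≤ (a^(k+1)-b^(k+1))*(a^(k+2)-b^(k+2)) + (a^k-b^k)*(a^(k+3)-b^(k+3)) := by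
  rcases le_total a b with h | h
  · have p1 : a^(k+1) ≤ b^(k+1) := pow_le_pow_left₀ ha.le h _
    have p2 : a^(k+2) ≤ b^(k+2) := pow_le_pow_left₀ ha.le h _
    have p3 : a^k ≤ b^k := pow_le_pow_left₀ ha.le h _
    have p4 : a^(k+3) ≤ b^(k+3) := pow_le_pow_left₀ ha.le h _
    nlinarith [mul_nonneg (sub_nonneg.2 p1) (sub_nonneg.2 p2),
      mul_nonneg (sub_nonneg.2 p3) (sub_nonneg.2 p4)]
  · have p1 : b^(k+1) ≤ a^(k+1) := pow_le_pow_left₀ hb.le h _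
    have p2 : b^(k+2) ≤ a^(k+2) := pow_le_pow_left₀ hb.le h _
    have p3 : b^k ≤ a^k := pow_le_pow_left₀ hb.le h _
    have p4 : b^(k+3) ≤ a^(k+3) := pow_le_pow_left₀ hb.le h _
    nlinarith [mul_nonneg (sub_nonneg.2 p1) (sub_nonneg.2 p2),
      mul_nonneg (sub_nonneg.2 p3) (sub_nonneg.2 p4)]

theorem pair_rhs_eq' (k : ℕ) (a b : ℝ) (ha : 0 < a) (hb : 0 < b)
    (h : (a^(k+1)-b^(k+1))*(a^(k+2)-b^(k+2)) + (a^k-b^k)*(a^(k+3)-b^(k+3)) = 0) :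
    a = b := by
  rcases lt_trichotomy a b with hlt | heq | hgt
  · exfalso
    have p1 : a^(k+1) < b^(k+1) := pow_lt_pow_left₀ hlt ha.le (by omega)
    have p2 : a^(k+2) < b^(k+2) := pow_lt_pow_left₀ hlt ha.le (by omega)
    have p3 : a^k ≤ b^k := pow_le_pow_left₀ ha.le hlt.le _
    have p4 : a^(k+3) ≤ b^(k+3) := pow_le_pow_left₀ ha.le hlt.le _
    nlinarith [mul_pos (sub_pos.2 p1) (sub_pos.2 p2),
      mul_nonneg (sub_nonneg.2 p3) (sub_nonneg.2 p4)]
  · exact heq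
  · exfalso
    have p1 : b^(k+1) < a^(k+1) := pow_lt_pow_left₀ hgt hb.le (by omega)
    have p2 : b^(k+2) < a^(k+2) := pow_lt_pow_left₀ hgt hb.le (by omega)
    have p3 : b^k ≤ a^k := pow_le_pow_left₀ hb.le hgt.le _
    have p4 : b^(k+3) ≤ a^(k+3) := pow_le_pow_left₀ hb.le hgt.le _
    nlinarith [mul_pos (sub_pos.2 p1) (sub_pos.2 p2),
      mul_nonneg (sub_nonneg.2 p3) (sub_nonneg.2 p4)]

theorem gasparyan_odd_eq_iff (m n : ℕ) (hm : 1 ≤ m) (hmo : Odd m) (hn : 2 ≤ n)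
    (x : Fin n → ℝ) (hx : ∀ i, 0 < x i)
    (heq : ∑ r ∈ Finset.range (2 * m + 1),
        (-1 : ℝ) ^ r * (∑ k, x k ^ r) * (∑ k, x k ^ (2 * m - r))
      = (∑ i, x i ^ (m - 1)) * (∑ i, x i ^ (m + 1))) :
    ∀ i j, x i = x j := by
  obtain ⟨k, rfl⟩ : ∃ k, m = k + 1 := ⟨m - 1, by omega⟩
  simp only [Nat.add_sub_cancel, show k + 1 + 1 = k + 2 from rfl] at heq
  set N := 2 * (k + 1) + 1 with hN
  -- rewrite LHS of heq as a double sum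
  have hL : ∑ r ∈ Finset.range N,
        (-1 : ℝ) ^ r * (∑ k', x k' ^ r) * (∑ k', x k' ^ (2 * (k+1) - r))
      = ∑ i, ∑ j, ∑ r ∈ Finset.range N, (-1:ℝ)^r * x i ^ r * x j ^ (2*(k+1) - r) := by
    have step1 : ∑ r ∈ Finset.range N,
          (-1 : ℝ) ^ r * (∑ k', x k' ^ r) * (∑ k', x k' ^ (2 * (k+1) - r))
        = ∑ r ∈ Finset.range N, ∑ i, ∑ j, (-1:ℝ)^r * x i ^ r * x j ^ (2*(k+1) - r) := by
      refine Finset.sum_congr rfl fun r _ => ?_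
      simp only [Finset.mul_sum, Finset.sum_mul]
      rw [Finset.sum_comm]
    rw [step1, Finset.sum_comm]
    exact Finset.sum_congr rfl fun i _ => Finset.sum_comm
  have hR : (∑ i, x i ^ k) * (∑ i, x i ^ (k + 2))
      = ∑ i, ∑ j, x i ^ k * x j ^ (k + 2) := by
    rw [Finset.sum_mul_sum]
  rw [hL, hR] at heq
  -- symmetric comparison terms
  set F : ℝ → ℝ → ℝ := fun a b => ∑ r ∈ Finset.range N, (-1:ℝ)^r * a ^ r * b ^ (2*(k+1) - r)
    with hF
  set T : Fin n → Fin n → ℝ := fun i j =>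
    F (x i) (x j) + F (x j) (x i) - x i ^ k * x j ^ (k+2) - (x i) ^ (k+2) * x j ^ k with hT
  have c1 : ∑ i, ∑ j, F (x j) (x i) = ∑ i, ∑ j, F (x i) (x j) := Finset.sum_comm
  have c2 : ∑ i, ∑ j, (x i) ^ (k+2) * x j ^ k = ∑ i, ∑ j, x i ^ k * x j ^ (k+2) := by
    rw [Finset.sum_comm]
    exact Finset.sum_congr rfl fun i _ => Finset.sum_congr rfl fun j _ => mul_comm _ _
  have hzero : ∑ i, ∑ j, T i j = 0 := by
    have expand : ∑ i, ∑ j, T i j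
        = (∑ i, ∑ j, F (x i) (x j)) + (∑ i, ∑ j, F (x j) (x i))
          - (∑ i, ∑ j, x i ^ k * x j ^ (k+2)) - (∑ i, ∑ j, (x i) ^ (k+2) * x j ^ k) := by
      simp only [hT, Finset.sum_add_distrib, Finset.sum_sub_distrib]
    rw [expand, c1, c2]
    linarith [heq]
  have hTnonneg : ∀ i j, 0 ≤ T i j := by
    intro i j
    have hid := key_identity' k (x i) (x j)
    have hr := pair_rhs_nonneg' k (x i) (x j) (hx i) (hx j)
    have hab : 0 < x i + x j := by linarith [hx i, hx j]
    have h0 : 0 ≤ (x i + x j) * T i j := by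
      rw [mul_comm, hT]; simp only; rw [hid]; exact hr
    exact nonneg_of_mul_nonneg_right h0 hab
  have hTij : ∀ i j, T i j = 0 := by
    have h1 := (Finset.sum_eq_zero_iff_of_nonneg
      (fun i _ => Finset.sum_nonneg fun j _ => hTnonneg i j)).mp hzero
    intro i j
    have h2 := (Finset.sum_eq_zero_iff_of_nonneg
      (fun j _ => hTnonneg i j)).mp (h1 i (Finset.mem_univ i))
    exact h2 j (Finset.mem_univ j)
  intro i j
  apply pair_rhs_eq' k (x i) (x j) (hx i) (hx j)
  have hid := key_identity' k (x i) (x j)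
  have := hTij i j
  rw [hT] at this
  simp only at this
  rw [← hid, this, zero_mul]
end

section
/- Let a_1,...,a_n be positive reals and F(r) = (Σ_{i=1}^n a_i^r)(Σ_{j=1}^n a_j^{2m-r}). If 0 ≤ r < s ≤ m, then F(r) ≥ F(s); i.e., F is nonincreasing on [0, m]. -/
lemma key_ineq_s10 (x y : ℝ) (hx : 0 < x) (hy : 0 < y) (r u v : ℝ)
    (hu : 0 ≤ u) (hv : 0 ≤ v) :
    x ^ (r + u) * y ^ (r + v) + y ^ (r + u) * x ^ (r + v)
      ≤ x ^ r * y ^ (r + u + v) + y ^ r * x ^ (r + u + v) := by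
  have h1 : 0 ≤ (y ^ u - x ^ u) * (y ^ v - x ^ v) := by
    rcases le_total x y with h | h
    · exact mul_nonneg (by nlinarith [Real.rpow_le_rpow hx.le h hu])
        (by nlinarith [Real.rpow_le_rpow hx.le h hv])
    · nlinarith [Real.rpow_le_rpow hy.le h hu, Real.rpow_le_rpow hy.le h hv]
  have hxr := Real.rpow_pos_of_pos hx r
  have hyr := Real.rpow_pos_of_pos hy r
  rw [Real.rpow_add hx, Real.rpow_add hy, Real.rpow_add hx, Real.rpow_add hy,
    Real.rpow_add hx, Real.rpow_add hx, Real.rpow_add hy, Real.rpow_add hy]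
  nlinarith [mul_nonneg (mul_pos hxr hyr).le h1]

theorem F_antitone (m n : ℕ) (hm : 1 ≤ m) (a : Fin n → ℝ) (ha : ∀ i, 0 < a i)
    (r s : ℝ) (hr : 0 ≤ r) (hrs : r < s) (hs : s ≤ m) :
    (∑ i, a i ^ s) * (∑ j, a j ^ ((2 * m : ℝ) - s))
      ≤ (∑ i, a i ^ r) * (∑ j, a j ^ ((2 * m : ℝ) - r)) := by
  have hm1 : (1 : ℝ) ≤ m := by exact_mod_cast hm
  have key : ∀ i j, a i ^ s * a j ^ ((2 * m : ℝ) - s) + a j ^ s * a i ^ ((2 * m : ℝ) - s)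
      ≤ a i ^ r * a j ^ ((2 * m : ℝ) - r) + a j ^ r * a i ^ ((2 * m : ℝ) - r) := by
    intro i j
    have h := key_ineq_s10 (a i) (a j) (ha i) (ha j) r (s - r) ((2 * m : ℝ) - s - r)
      (by linarith) (by linarith)
    have e1 : r + (s - r) = s := by ring
    have e2 : r + ((2 * m : ℝ) - s - r) = (2 * m : ℝ) - s := by ring
    have e3 : s + ((2 * m : ℝ) - s - r) = (2 * m : ℝ) - r := by ring
    rw [e1, e2, e3] at h
    linarith [h]
  have expand : ∀ p q : ℝ, (∑ i, a i ^ p) * (∑ j, a j ^ q)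
      = ∑ i, ∑ j, a i ^ p * a j ^ q := by
    intro p q
    rw [Finset.sum_mul_sum]
  have sym : ∀ p q : ℝ, (∑ i, a i ^ p) * (∑ j, a j ^ q)
      = ∑ i, ∑ j, a j ^ p * a i ^ q := by
    intro p q
    rw [expand p q, Finset.sum_comm]
  have hL : 2 * ((∑ i, a i ^ s) * ∑ j, a j ^ ((2 * m : ℝ) - s))
      = ∑ i, ∑ j, (a i ^ s * a j ^ ((2 * m : ℝ) - s) + a j ^ s * a i ^ ((2 * m : ℝ) - s)) := by
    simp only [Finset.sum_add_distrib]
    rw [two_mul, ← expand, ← sym]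
  have hR : 2 * ((∑ i, a i ^ r) * ∑ j, a j ^ ((2 * m : ℝ) - r))
      = ∑ i, ∑ j, (a i ^ r * a j ^ ((2 * m : ℝ) - r) + a j ^ r * a i ^ ((2 * m : ℝ) - r)) := by
    simp only [Finset.sum_add_distrib]
    rw [two_mul, ← expand, ← sym]
  have hsum : 2 * ((∑ i, a i ^ s) * ∑ j, a j ^ ((2 * m : ℝ) - s))
      ≤ 2 * ((∑ i, a i ^ r) * ∑ j, a j ^ ((2 * m : ℝ) - r)) := by
    rw [hL, hR]
    exact Finset.sum_le_sum fun i _ => Finset.sum_le_sum fun j _ => key i j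
  linarith
end

section
/- Let a_1,...,a_n be positive reals and F(r) = (Σ_{i=1}^n a_i^r)(Σ_{j=1}^n a_j^{2m-r}). If m ≤ r < s ≤ 2m, then F(r) ≤ F(s); i.e., F is nondecreasing on [m, 2m]. -/
open Real

lemma pair_ineq (x y r s c : ℝ) (hx : 0 < x) (hy : 0 < y)
    (hsr : 0 < s - r) (hc : 0 < r + s - c) :
    x ^ r * y ^ (c - r) + y ^ r * x ^ (c - r)
      ≤ x ^ s * y ^ (c - s) + y ^ s * x ^ (c - s) := by
  have key : 0 ≤ (x ^ (c - s) * y ^ (c - s)) *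
      ((x ^ (s - r) - y ^ (s - r)) * (x ^ (r + s - c) - y ^ (r + s - c))) := by
    apply mul_nonneg (by positivity)
    rcases le_total x y with h | h
    · have h1 : x ^ (s - r) ≤ y ^ (s - r) := rpow_le_rpow hx.le h hsr.le
      have h2 : x ^ (r + s - c) ≤ y ^ (r + s - c) := rpow_le_rpow hx.le h hc.le
      nlinarith
    · have h1 : y ^ (s - r) ≤ x ^ (s - r) := rpow_le_rpow hy.le h hsr.le
      have h2 : y ^ (r + s - c) ≤ x ^ (r + s - c) := rpow_le_rpow hy.le h hc.le
      nlinarith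
  have exs : x ^ s = x ^ (c - s) * (x ^ (s - r) * x ^ (r + s - c)) := by
    rw [← rpow_add hx, ← rpow_add hx]; congr 1; ring
  have eys : y ^ s = y ^ (c - s) * (y ^ (s - r) * y ^ (r + s - c)) := by
    rw [← rpow_add hy, ← rpow_add hy]; congr 1; ring
  have excr : x ^ (c - r) = x ^ (c - s) * x ^ (s - r) := by
    rw [← rpow_add hx]; congr 1; ring
  have eycr : y ^ (c - r) = y ^ (c - s) * y ^ (s - r) := by
    rw [← rpow_add hy]; congr 1; ring
  have exr : x ^ r = x ^ (c - s) * x ^ (r + s - c) := by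
    rw [← rpow_add hx]; congr 1; ring
  have eyr : y ^ r = y ^ (c - s) * y ^ (r + s - c) := by
    rw [← rpow_add hy]; congr 1; ring
  rw [exs, eys, excr, eycr, exr, eyr]
  nlinarith [key]

theorem F_monotone (m n : ℕ) (hm : 1 ≤ m) (a : Fin n → ℝ) (ha : ∀ i, 0 < a i)
    (r s : ℝ) (hr : (m : ℝ) ≤ r) (hrs : r < s) (hs : s ≤ 2 * m) :
    (∑ i, a i ^ r) * (∑ j, a j ^ ((2 * m : ℝ) - r))
      ≤ (∑ i, a i ^ s) * (∑ j, a j ^ ((2 * m : ℝ) - s)) := by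
  set c : ℝ := 2 * m with hcdef
  have hsr : 0 < s - r := by linarith
  have hc : 0 < r + s - c := by simp only [hcdef]; linarith
  have expand : ∀ t : ℝ, (∑ i, a i ^ t) * (∑ j, a j ^ (c - t))
      = ∑ i, ∑ j, a i ^ t * a j ^ (c - t) := fun t => Finset.sum_mul_sum _ _ _ _
  have expand' : ∀ t : ℝ, (∑ i, a i ^ t) * (∑ j, a j ^ (c - t))
      = ∑ i, ∑ j, a j ^ t * a i ^ (c - t) := by
    intro t
    rw [expand t, Finset.sum_comm]
  have h2 : (∑ i, a i ^ r) * (∑ j, a j ^ (c - r)) + (∑ i, a i ^ r) * (∑ j, a j ^ (c - r))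
      ≤ (∑ i, a i ^ s) * (∑ j, a j ^ (c - s)) + (∑ i, a i ^ s) * (∑ j, a j ^ (c - s)) := by
    nth_rewrite 1 [expand r]
    nth_rewrite 1 [expand' r]
    nth_rewrite 1 [expand s]
    nth_rewrite 1 [expand' s]
    rw [← Finset.sum_add_distrib, ← Finset.sum_add_distrib]
    apply Finset.sum_le_sum
    intro i _
    rw [← Finset.sum_add_distrib, ← Finset.sum_add_distrib]
    apply Finset.sum_le_sum
    intro j _
    exact pair_ineq (a i) (a j) r s c (ha i) (ha j) hsr hc
  linarith
end

section
/- Let a_1,...,a_n be positive reals (n ≥ 2) and F(r) = (Σ_{i=1}^n a_i^r)(Σ_{j=1}^n a_j^{2m-r}). If F(r) = F(s) for some 0 ≤ r < s ≤ m, then a_1 = a_2 = ... = a_n. -/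
open Real Finset in
private lemma exp_sym_key' (y u v : ℝ) :
    exp (u*y) + exp (-(u*y)) - (exp (v*y) + exp (-(v*y)))
      = (exp (((u+v)/2)*y) - exp (-(((u+v)/2)*y))) *
        (exp (((u-v)/2)*y) - exp (-(((u-v)/2)*y))) := by
  rw [mul_sub, sub_mul, sub_mul, ← exp_add, ← exp_add, ← exp_add, ← exp_add]
  ring_nf

open Real in
private lemma exp_sym_le' (y u v : ℝ) (hv : 0 ≤ v) (hvu : v ≤ u) :
    exp (v*y) + exp (-(v*y)) ≤ exp (u*y) + exp (-(u*y)) := by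
  have key := exp_sym_key' y u v
  rcases le_total 0 y with hy | hy
  · have h1 : exp (-(((u+v)/2)*y)) ≤ exp (((u+v)/2)*y) := by
      apply exp_le_exp.2; nlinarith
    have h2 : exp (-(((u-v)/2)*y)) ≤ exp (((u-v)/2)*y) := by
      apply exp_le_exp.2; nlinarith
    nlinarith [mul_nonneg (sub_nonneg.2 h1) (sub_nonneg.2 h2)]
  · have h1 : exp (((u+v)/2)*y) ≤ exp (-(((u+v)/2)*y)) := by
      apply exp_le_exp.2; nlinarith
    have h2 : exp (((u-v)/2)*y) ≤ exp (-(((u-v)/2)*y)) := by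
      apply exp_le_exp.2; nlinarith
    nlinarith [mul_nonneg (neg_nonneg.2 (sub_nonpos.2 h1)) (neg_nonneg.2 (sub_nonpos.2 h2))]

open Real in
private lemma exp_sym_lt' (y u v : ℝ) (hy : y ≠ 0) (hv : 0 ≤ v) (hvu : v < u) :
    exp (v*y) + exp (-(v*y)) < exp (u*y) + exp (-(u*y)) := by
  have hp : 0 < (u+v)/2 := by linarith
  have hq : 0 < (u-v)/2 := by linarith
  have key := exp_sym_key' y u v
  rcases lt_or_gt_of_ne hy with hy' | hy'
  · have h1 : exp (((u+v)/2)*y) < exp (-(((u+v)/2)*y)) := by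
      apply exp_lt_exp.2; nlinarith
    have h2 : exp (((u-v)/2)*y) < exp (-(((u-v)/2)*y)) := by
      apply exp_lt_exp.2; nlinarith
    nlinarith [mul_pos_of_neg_of_neg (sub_neg.2 h1) (sub_neg.2 h2)]
  · have h1 : exp (-(((u+v)/2)*y)) < exp (((u+v)/2)*y) := by
      apply exp_lt_exp.2; nlinarith
    have h2 : exp (-(((u-v)/2)*y)) < exp (((u-v)/2)*y) := by
      apply exp_lt_exp.2; nlinarith
    nlinarith [mul_pos (sub_pos.2 h1) (sub_pos.2 h2)]

open Real Finset in
theorem F_eq_implies_const (m n : ℕ) (hm : 1 ≤ m) (hn : 2 ≤ n)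
    (a : Fin n → ℝ) (ha : ∀ i, 0 < a i)
    (r s : ℝ) (hr : 0 ≤ r) (hrs : r < s) (hs : s ≤ m)
    (heq : (∑ i, a i ^ r) * (∑ j, a j ^ ((2 * m : ℝ) - r))
      = (∑ i, a i ^ s) * (∑ j, a j ^ ((2 * m : ℝ) - s))) :
    ∀ i j, a i = a j := by
  have hlog : ∀ (i j : Fin n) (t:ℝ),
      a i ^ t * a j ^ ((2 * m : ℝ) - t) + a j ^ t * a i ^ ((2 * m : ℝ) - t)
      = exp ((m:ℝ) * (log (a i) + log (a j))) *
        (exp (((m:ℝ) - t) * (log (a i) - log (a j))) +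
          exp (-(((m:ℝ) - t) * (log (a i) - log (a j))))) := by
    intro i j t
    rw [rpow_def_of_pos (ha i), rpow_def_of_pos (ha j), rpow_def_of_pos (ha i),
      rpow_def_of_pos (ha j), ← exp_add, ← exp_add, mul_add, ← exp_add, ← exp_add]
    rw [show log (a i) * t + log (a j) * ((2 * m : ℝ) - t)
        = (m:ℝ) * (log (a i) + log (a j)) + -(((m:ℝ) - t) * (log (a i) - log (a j))) by ring,
      show log (a j) * t + log (a i) * ((2 * m : ℝ) - t)
        = (m:ℝ) * (log (a i) + log (a j)) + ((m:ℝ) - t) * (log (a i) - log (a j)) by ring]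
    ring
  -- pointwise inequality
  have hle : ∀ p : Fin n × Fin n,
      a p.1 ^ s * a p.2 ^ ((2 * m : ℝ) - s) + a p.2 ^ s * a p.1 ^ ((2 * m : ℝ) - s)
      ≤ a p.1 ^ r * a p.2 ^ ((2 * m : ℝ) - r) + a p.2 ^ r * a p.1 ^ ((2 * m : ℝ) - r) := by
    intro p
    rw [hlog, hlog]
    exact mul_le_mul_of_nonneg_left
      (exp_sym_le' _ ((m:ℝ) - r) ((m:ℝ) - s) (by linarith) (by linarith)) (exp_pos _).le
  -- double-sum identity
  have h2F : ∀ t : ℝ, 2 * ((∑ i, a i ^ t) * (∑ j, a j ^ ((2 * m : ℝ) - t)))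
      = ∑ p : Fin n × Fin n,
          (a p.1 ^ t * a p.2 ^ ((2 * m : ℝ) - t) + a p.2 ^ t * a p.1 ^ ((2 * m : ℝ) - t)) := by
    intro t
    rw [Finset.sum_mul_sum]
    rw [← Finset.sum_product']
    rw [Finset.sum_add_distrib, two_mul]
    congr 1
    exact Finset.sum_nbij' Prod.swap Prod.swap (by simp) (by simp) (by simp) (by simp)
      (by intro p _; simp)
  have hsum_eq : ∑ p : Fin n × Fin n,
      (a p.1 ^ r * a p.2 ^ ((2 * m : ℝ) - r) + a p.2 ^ r * a p.1 ^ ((2 * m : ℝ) - r))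
      = ∑ p : Fin n × Fin n,
      (a p.1 ^ s * a p.2 ^ ((2 * m : ℝ) - s) + a p.2 ^ s * a p.1 ^ ((2 * m : ℝ) - s)) := by
    rw [← h2F, ← h2F, heq]
  have hall := (Finset.sum_eq_sum_iff_of_le (fun p _ => hle p)).1 hsum_eq.symm
  intro i j
  by_contra hne
  have hy : log (a i) - log (a j) ≠ 0 := by
    intro h
    apply hne
    have : log (a i) = log (a j) := by linarith
    calc a i = exp (log (a i)) := (exp_log (ha i)).symm
    _ = exp (log (a j)) := by rw [this]
    _ = a j := exp_log (ha j)
  have hstrict :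
      a i ^ s * a j ^ ((2 * m : ℝ) - s) + a j ^ s * a i ^ ((2 * m : ℝ) - s)
      < a i ^ r * a j ^ ((2 * m : ℝ) - r) + a j ^ r * a i ^ ((2 * m : ℝ) - r) := by
    rw [hlog, hlog]
    exact mul_lt_mul_of_pos_left
      (exp_sym_lt' _ ((m:ℝ) - r) ((m:ℝ) - s) hy (by linarith) (by linarith)) (exp_pos _)
  have := hall (i, j) (Finset.mem_univ _)
  simp only at this
  linarith
end

section
/- Let a_1,...,a_n be positive reals, and let r, s, u, v be nonnegative reals with s > r, u = 2m − r, v = 2m − s (so u − v = s − r > 0) and s + r ≤ 2m. Then the Gini mean inequality holds: ((Σ_k a_k^{2m−r})/(Σ_k a_k^{2m−s}))^{1/(s−r)} ≥ ((Σ_k a_k^s)/(Σ_k a_k^r))^{1/(s−r)}. -/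
theorem gini_mean_inequality (m n : ℕ) (hm : 1 ≤ m) (a : Fin n → ℝ)
    (ha : ∀ i, 0 < a i) (r s : ℝ) (hr : 0 ≤ r) (hrs : r < s)
    (hsum : r + s ≤ 2 * m) :
    ((∑ k, a k ^ s) / (∑ k, a k ^ r)) ^ (1 / (s - r))
      ≤ ((∑ k, a k ^ ((2 * m : ℝ) - r)) / (∑ k, a k ^ ((2 * m : ℝ) - s))) ^ (1 / (s - r)) := by
  have hsr : 0 < s - r := by linarith
  have hs : 0 ≤ s := le_of_lt (lt_of_le_of_lt hr hrs)
  have hws : 0 ≤ 2 * (m : ℝ) - r - s := by linarith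
  apply Real.rpow_le_rpow
  · exact div_nonneg (Finset.sum_nonneg fun i _ => (Real.rpow_pos_of_pos (ha i) s).le)
      (Finset.sum_nonneg fun i _ => (Real.rpow_pos_of_pos (ha i) r).le)
  · rcases Nat.eq_zero_or_pos n with hn | hn
    · subst hn; simp
    haveI : Nonempty (Fin n) := Fin.pos_iff_nonempty.mp hn
    -- main inequality
    have hposr : 0 < ∑ k, a k ^ r :=
      Finset.sum_pos (fun i _ => Real.rpow_pos_of_pos (ha i) r) Finset.univ_nonempty
    have hposv : 0 < ∑ k, a k ^ ((2 * m : ℝ) - s) :=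
      Finset.sum_pos (fun i _ => Real.rpow_pos_of_pos (ha i) _) Finset.univ_nonempty
    rw [div_le_div_iff₀ hposr hposv]
    have key : ∀ x y : ℝ, 0 < x → 0 < y →
        x ^ s * y ^ ((2 * m : ℝ) - s) + y ^ s * x ^ ((2 * m : ℝ) - s)
          ≤ x ^ ((2 * m : ℝ) - r) * y ^ r + y ^ ((2 * m : ℝ) - r) * x ^ r := by
      intro x y hx hy
      have e1 : x ^ s = x ^ r * x ^ (s - r) := by
        rw [← Real.rpow_add hx]; ring_nf
      have e2 : y ^ s = y ^ r * y ^ (s - r) := by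
        rw [← Real.rpow_add hy]; ring_nf
      have e3 : x ^ ((2 * m : ℝ) - s) = x ^ r * x ^ (2 * (m : ℝ) - r - s) := by
        rw [← Real.rpow_add hx]; ring_nf
      have e4 : y ^ ((2 * m : ℝ) - s) = y ^ r * y ^ (2 * (m : ℝ) - r - s) := by
        rw [← Real.rpow_add hy]; ring_nf
      have e5 : x ^ ((2 * m : ℝ) - r) = x ^ r * (x ^ (s - r) * x ^ (2 * (m : ℝ) - r - s)) := by
        rw [← Real.rpow_add hx, ← Real.rpow_add hx]; ring_nf
      have e6 : y ^ ((2 * m : ℝ) - r) = y ^ r * (y ^ (s - r) * y ^ (2 * (m : ℝ) - r - s)) := by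
        rw [← Real.rpow_add hy, ← Real.rpow_add hy]; ring_nf
      rw [e1, e2, e3, e4, e5, e6]
      have hcx : 0 < x ^ r := Real.rpow_pos_of_pos hx r
      have hcy : 0 < y ^ r := Real.rpow_pos_of_pos hy r
      have hkey : 0 ≤ (x ^ (s - r) - y ^ (s - r)) *
          (x ^ (2 * (m : ℝ) - r - s) - y ^ (2 * (m : ℝ) - r - s)) := by
        rcases le_total x y with h | h
        · have h1 : x ^ (s - r) ≤ y ^ (s - r) :=
            Real.rpow_le_rpow (le_of_lt hx) h (le_of_lt hsr)
          have h2 : x ^ (2 * (m : ℝ) - r - s) ≤ y ^ (2 * (m : ℝ) - r - s) :=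
            Real.rpow_le_rpow (le_of_lt hx) h hws
          nlinarith
        · have h1 : y ^ (s - r) ≤ x ^ (s - r) :=
            Real.rpow_le_rpow (le_of_lt hy) h (le_of_lt hsr)
          have h2 : y ^ (2 * (m : ℝ) - r - s) ≤ x ^ (2 * (m : ℝ) - r - s) :=
            Real.rpow_le_rpow (le_of_lt hy) h hws
          nlinarith
      nlinarith [mul_pos hcx hcy, mul_nonneg (le_of_lt (mul_pos hcx hcy)) hkey]
    -- double sum argument
    set f : Fin n → Fin n → ℝ := fun i j => a i ^ s * a j ^ ((2 * m : ℝ) - s) with hf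
    set g : Fin n → Fin n → ℝ := fun i j => a i ^ ((2 * m : ℝ) - r) * a j ^ r with hg
    have hA : (∑ k, a k ^ s) * (∑ k, a k ^ ((2 * m : ℝ) - s)) = ∑ i, ∑ j, f i j := by
      rw [Finset.sum_mul_sum]
    have hB : (∑ k, a k ^ ((2 * m : ℝ) - r)) * (∑ k, a k ^ r) = ∑ i, ∑ j, g i j := by
      rw [Finset.sum_mul_sum]
    rw [hA, hB]
    have h2 : (∑ i, ∑ j, f i j) * 2 ≤ (∑ i, ∑ j, g i j) * 2 := by
      have eA : (∑ i, ∑ j, f i j) * 2 = ∑ i, ∑ j, (f i j + f j i) := by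
        rw [mul_two]
        nth_rewrite 2 [Finset.sum_comm]
        rw [← Finset.sum_add_distrib]
        simp [Finset.sum_add_distrib]
      have eB : (∑ i, ∑ j, g i j) * 2 = ∑ i, ∑ j, (g i j + g j i) := by
        rw [mul_two]
        nth_rewrite 2 [Finset.sum_comm]
        rw [← Finset.sum_add_distrib]
        simp [Finset.sum_add_distrib]
      rw [eA, eB]
      apply Finset.sum_le_sum
      intro i _
      apply Finset.sum_le_sum
      intro j _
      have := key (a i) (a j) (ha i) (ha j)
      simp only [hf, hg]
      nlinarith [this]
    linarith
  · positivity
end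

section
/- Let x_1,...,x_n be arbitrary real numbers, m a positive integer, and r an even natural number with 0 ≤ r ≤ m − 1. Then (Σ_{i=1}^n x_i^r)(Σ_{j=1}^n x_j^{2m−r}) ≥ (Σ_{i=1}^n x_i^{r+1})(Σ_{j=1}^n x_j^{2m−r−1}). -/
theorem F_step_real (m n : ℕ) (hm : 1 ≤ m) (x : Fin n → ℝ)
    (r : ℕ) (hre : Even r) (hr : r ≤ m - 1) :
    (∑ i, x i ^ (r + 1)) * (∑ j, x j ^ (2 * m - r - 1))
      ≤ (∑ i, x i ^ r) * (∑ j, x j ^ (2 * m - r)) := by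
  obtain ⟨s, hs⟩ := Nat.exists_eq_add_of_le (show r + 1 ≤ m by omega)
  set k := 2 * s + 1 with hk
  have h1 : 2 * m - r = r + 1 + k := by omega
  have h2 : 2 * m - r - 1 = r + k := by omega
  rw [h2, h1]
  have hodd : Odd k := ⟨s, by omega⟩
  have key : 0 ≤ ∑ i : Fin n, ∑ j : Fin n,
      x i ^ r * x j ^ r * ((x i - x j) * (x i ^ k - x j ^ k)) := by
    apply Finset.sum_nonneg; intro i _
    apply Finset.sum_nonneg; intro j _
    apply mul_nonneg (mul_nonneg (hre.pow_nonneg _) (hre.pow_nonneg _))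
    rcases le_total (x j) (x i) with h | h
    · exact mul_nonneg (by linarith)
        (sub_nonneg.2 ((hodd.strictMono_pow (R := ℝ)).monotone h))
    · exact mul_nonneg_of_nonpos_of_nonpos (by linarith)
        (sub_nonpos.2 ((hodd.strictMono_pow (R := ℝ)).monotone h))
  have expand : ∀ i j : Fin n,
      x i ^ r * x j ^ r * ((x i - x j) * (x i ^ k - x j ^ k))
        = x i ^ (r + 1 + k) * x j ^ r - x i ^ (r + 1) * x j ^ (r + k)
          - x i ^ (r + k) * x j ^ (r + 1) + x i ^ r * x j ^ (r + 1 + k) := by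
    intro i j; ring
  simp only [expand, Finset.sum_sub_distrib, Finset.sum_add_distrib,
    ← Finset.sum_mul, ← Finset.mul_sum] at key
  nlinarith [key]
end
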